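/- (M-step maximizer.) Let n ≥ 1, let c_1, …, c_n be positive real numbers, and let D ⊆ {1, …, n} be a nonempty set (the event indices). For λ = (λ_i)_{i ∈ D} with λ_i > 0 for all i ∈ D, define F(λ) := Σ_{i ∈ D} log λ_i − Σ_{i=1}^{n} (Σ_{j ∈ D, j ≤ i} λ_j) c_i. Define λ̂_i := 1 / (Σ_{j = i}^{n} c_j) for i ∈ D. Then λ̂_i > 0 for all i ∈ D, and for every λ with λ_i > 0 for all i ∈ D, F(λ) ≤ F(λ̂), with equality if and only if λ_i = λ̂_i for all i ∈ D. -/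
import Mathlib


open Finset

/-- M-step maximizer: the Breslow-type estimator `λ̂_i = 1/∑_{j ≥ i} c_j` uniquely
maximizes `F(λ) = ∑_{i ∈ D} log λ_i − ∑_{i=1}^n (∑_{j ∈ D, j ≤ i} λ_j) c_i` over
positive baseline hazard jump sizes `(λ_i)_{i ∈ D}`. -/
theorem mStep_maximizer (n : ℕ) (hn : 1 ≤ n) (c : ℕ → ℝ)
    (hc : ∀ i ∈ Finset.Icc 1 n, 0 < c i)
    (D : Finset ℕ) (hD : D ⊆ Finset.Icc 1 n) (hDne : D.Nonempty) :
    let F : (ℕ → ℝ) → ℝ := fun lam =>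
      (∑ i ∈ D, Real.log (lam i)) -
        ∑ i ∈ Finset.Icc 1 n, (∑ j ∈ D.filter (fun j => j ≤ i), lam j) * c i
    let lamHat : ℕ → ℝ := fun i => 1 / ∑ j ∈ Finset.Icc i n, c j
    (∀ i ∈ D, 0 < lamHat i) ∧
      ∀ lam : ℕ → ℝ, (∀ i ∈ D, 0 < lam i) →
        F lam ≤ F lamHat ∧ (F lam = F lamHat ↔ ∀ i ∈ D, lam i = lamHat i) := by
  intro F lamHat
  set S : ℕ → ℝ := fun i => ∑ j ∈ Finset.Icc i n, c j with hSdef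
  have hSpos : ∀ i ∈ D, 0 < S i := by
    intro i hi
    obtain ⟨h1, h2⟩ := Finset.mem_Icc.mp (hD hi)
    apply Finset.sum_pos
    · intro j hj
      obtain ⟨hj1, hj2⟩ := Finset.mem_Icc.mp hj
      exact hc j (Finset.mem_Icc.mpr ⟨h1.trans hj1, hj2⟩)
    · exact ⟨i, Finset.mem_Icc.mpr ⟨le_refl i, h2⟩⟩
  have hHatpos : ∀ i ∈ D, 0 < lamHat i := by
    intro i hi
    have := hSpos i hi
    show 0 < 1 / S i
    positivity
  have hF : ∀ lam : ℕ → ℝ,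
      F lam = ∑ i ∈ D, (Real.log (lam i) - lam i * S i) := by
    intro lam
    show (∑ i ∈ D, Real.log (lam i)) -
        ∑ i ∈ Finset.Icc 1 n, (∑ j ∈ D.filter (fun j => j ≤ i), lam j) * c i = _
    rw [Finset.sum_sub_distrib]
    congr 1
    calc ∑ i ∈ Finset.Icc 1 n, (∑ j ∈ D.filter (fun j => j ≤ i), lam j) * c i
        = ∑ i ∈ Finset.Icc 1 n, ∑ j ∈ D, if j ≤ i then lam j * c i else 0 := by
          refine Finset.sum_congr rfl fun i _ => ?_
          rw [Finset.sum_mul, Finset.sum_filter]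
      _ = ∑ j ∈ D, ∑ i ∈ Finset.Icc 1 n, if j ≤ i then lam j * c i else 0 :=
          Finset.sum_comm
      _ = ∑ j ∈ D, lam j * S j := by
          refine Finset.sum_congr rfl fun j hj => ?_
          obtain ⟨hj1, hj2⟩ := Finset.mem_Icc.mp (hD hj)
          rw [← Finset.sum_filter]
          have hset : (Finset.Icc 1 n).filter (fun i => j ≤ i) = Finset.Icc j n := by
            ext i
            simp only [Finset.mem_filter, Finset.mem_Icc]
            omega
          rw [hset, ← Finset.mul_sum]
  refine ⟨hHatpos, ?_⟩
  intro lam hlam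
  have hterm : ∀ i ∈ D, Real.log (lamHat i) - lamHat i * S i
      = -Real.log (S i) - 1 := by
    intro i hi
    have hS := hSpos i hi
    show Real.log (1 / S i) - (1 / S i) * S i = _
    rw [one_div, Real.log_inv, inv_mul_cancel₀ hS.ne']
  have key : F lamHat - F lam
      = ∑ i ∈ D, ((lam i * S i - 1) - Real.log (lam i * S i)) := by
    rw [hF, hF, ← Finset.sum_sub_distrib]
    refine Finset.sum_congr rfl fun i hi => ?_
    have hS := hSpos i hi
    have hl := hlam i hi
    rw [hterm i hi, Real.log_mul hl.ne' hS.ne']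
    ring
  have htnn : ∀ i ∈ D, 0 ≤ (lam i * S i - 1) - Real.log (lam i * S i) := by
    intro i hi
    have := Real.log_le_sub_one_of_pos (mul_pos (hlam i hi) (hSpos i hi))
    linarith
  have hsum : 0 ≤ ∑ i ∈ D, ((lam i * S i - 1) - Real.log (lam i * S i)) :=
    Finset.sum_nonneg htnn
  constructor
  · linarith [key, hsum]
  · constructor
    · intro heq
      have hz : ∑ i ∈ D, ((lam i * S i - 1) - Real.log (lam i * S i)) = 0 := by
        linarith [key]
      have hall := (Finset.sum_eq_zero_iff_of_nonneg htnn).mp hz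
      intro i hi
      have hSi := hSpos i hi
      have hli := hlam i hi
      have hone : lam i * S i = 1 := by
        by_contra hne
        have := Real.log_lt_sub_one_of_pos (mul_pos hli hSi) hne
        have := hall i hi
        linarith
      show lam i = 1 / S i
      field_simp
      linarith [hone]
    · intro hall
      have : ∀ i ∈ D, Real.log (lam i) - lam i * S i
          = Real.log (lamHat i) - lamHat i * S i := by
        intro i hi; rw [hall i hi]
      rw [hF, hF]
      exact Finset.sum_congr rfl this
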